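/- Let β*, x ∈ ℝ^d with ‖x‖₂ ≤ b_x, set y = x^⊤β* and c₁ = ‖β*‖₁. Let K ≥ 1 be an integer, γ ∈ (0, 3/2), r = 1 − (2/3)γ ∈ (0,1], and let S ≥ 1, c > 0, δ ∈ (0,1), with b = 2γ(2S−1)·√((log d + log S − log δ)/c). Let n > N₀ ≥ 1 be integers, p ∈ (0,1], and suppose m = np − p/2 is a positive integer with m ≤ n − N₀. Let β_1,…,β_n ∈ ℝ^d with ‖β_j‖₂ ≤ C_x for all j, and assume: (a) ‖β* − β_j‖₁ ≤ c₁ (r + b/√j)^K for every j > N₀; (b) (K−1)·b/√N₀ < r, and set η = r/(r − (K−1)b/√N₀); (c) the set J = { j ∈ {1,…,n} : x^⊤β_j ≥ B′ } satisfies J ∩ {1,…,N₀} = ∅ and | |J| − m | ≤ ε, where ε = K√(np)·r^K and B′ ∈ ℝ. Then the linear read-out prediction ŷ = (1/m) Σ_{j∈J} (x^⊤β_j − B′) + B′ satisfies |y − ŷ| ≤ c₁ b_x r^K + (c₄ K/√n) r^{K−1}, where c₄ = ( 2√2 · b_x c₁ η · 2γ(2S−1)√((log d + log S − log δ)/c)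 + 2 b_x C_x + 2|B′| ) / √p. -/

import Mathlib

/-- Euclidean norm on ℝ^d. -/
noncomputable def l2 {d : ℕ} (v : Fin d → ℝ) : ℝ := Real.sqrt (∑ i, (v i) ^ 2)

/-- ℓ₁ norm on ℝ^d. -/
noncomputable def l1 {d : ℕ} (v : Fin d → ℝ) : ℝ := ∑ i, |v i|

lemma aux_pow (n : ℕ) (r s : ℝ) (hr : 0 ≤ r) (hs : 0 ≤ s) :
    (r + s) ^ (n + 1) ≤ r ^ (n + 1) + ((n : ℝ) + 1) * s * (r + s) ^ n := by
  induction n with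
  | zero => simp
  | succ k ih =>
    have hrs : 0 ≤ r + s := by linarith
    have hpow : r ^ (k + 1) ≤ (r + s) ^ (k + 1) := pow_le_pow_left₀ hr (by linarith) _
    have h2 : (r + s) * (r + s) ^ (k + 1) ≤
        (r + s) * (r ^ (k + 1) + ((k : ℝ) + 1) * s * (r + s) ^ k) :=
      mul_le_mul_of_nonneg_left ih hrs
    have h4 : s * r ^ (k + 1) ≤ s * (r + s) ^ (k + 1) :=
      mul_le_mul_of_nonneg_left hpow hs
    have h5 : (r + s) ^ (k + 1 + 1) ≤ r ^ (k + 1 + 1) + ((k : ℝ) + 2) * s * (r + s) ^ (k + 1) := by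
      calc (r + s) ^ (k + 1 + 1) = (r + s) * (r + s) ^ (k + 1) := by ring
        _ ≤ (r + s) * (r ^ (k + 1) + ((k : ℝ) + 1) * s * (r + s) ^ k) := h2
        _ = r * r ^ (k + 1) + s * r ^ (k + 1) + ((k : ℝ) + 1) * s * (r + s) ^ (k + 1) := by
            ring
        _ ≤ r * r ^ (k + 1) + s * (r + s) ^ (k + 1) + ((k : ℝ) + 1) * s * (r + s) ^ (k + 1) := by
            linarith
        _ = r ^ (k + 1 + 1) + ((k : ℝ) + 2) * s * (r + s) ^ (k + 1) := by ring
    convert h5 using 3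
    push_cast
    ring

lemma aux_eta (M : ℕ) (r s₀ : ℝ) (hr : 0 < r) (hs : 0 ≤ s₀) (h : (M : ℝ) * s₀ < r) :
    (r + s₀) ^ M * (r - (M : ℝ) * s₀) ≤ r ^ M * r := by
  rcases Nat.eq_zero_or_pos M with hM | hM
  · subst hM; simp
  set t := s₀ / r with ht
  have ht0 : 0 ≤ t := div_nonneg hs hr.le
  have htM : (M : ℝ) * t < 1 := by
    rw [ht, mul_div_assoc'] at *
    exact (div_lt_one hr).mpr h
  have ht1 : t ≤ 1 := by
    have hM1 : (1 : ℝ) ≤ M := by exact_mod_cast hM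
    nlinarith
  have h1 : 1 - (M : ℝ) * t ≤ (1 - t) ^ M := by
    have := one_add_mul_le_pow (a := -t) (by linarith) M
    rw [← sub_eq_add_neg] at this
    linarith
  have h2 : (1 + t) ^ M * (1 - t) ^ M = (1 - t ^ 2) ^ M := by
    rw [← mul_pow]; ring_nf
  have h3 : (1 - t ^ 2) ^ M ≤ 1 := by
    apply pow_le_one₀ (by nlinarith) (by nlinarith)
  have h4 : (1 + t) ^ M * (1 - (M : ℝ) * t) ≤ 1 := by
    calc (1 + t) ^ M * (1 - (M : ℝ) * t) ≤ (1 + t) ^ M * (1 - t) ^ M :=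
          mul_le_mul_of_nonneg_left h1 (pow_nonneg (by linarith) M)
      _ = (1 - t ^ 2) ^ M := h2
      _ ≤ 1 := h3
  have e1 : r + s₀ = r * (1 + t) := by
    rw [ht]; field_simp
  have e2 : r - (M : ℝ) * s₀ = r * (1 - (M : ℝ) * t) := by
    rw [ht]; field_simp
  rw [e1, e2, mul_pow]
  calc r ^ M * (1 + t) ^ M * (r * (1 - (M : ℝ) * t))
      = (r ^ M * r) * ((1 + t) ^ M * (1 - (M : ℝ) * t)) := by ring
    _ ≤ (r ^ M * r) * 1 := by
        apply mul_le_mul_of_nonneg_left h4 (by positivity)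
    _ = r ^ M * r := mul_one _

lemma aux_binom (K : ℕ) (hK : 1 ≤ K) (r s s₀ η : ℝ) (hr : 0 < r) (hs : 0 ≤ s)
    (hss : s ≤ s₀) (hKs : ((K : ℝ) - 1) * s₀ < r)
    (hη : η = r / (r - ((K : ℝ) - 1) * s₀)) :
    (r + s) ^ K ≤ r ^ K + (K : ℝ) * η * s * r ^ (K - 1) := by
  obtain ⟨M, rfl⟩ : ∃ M, K = M + 1 := ⟨K - 1, by omega⟩
  have hcast : ((M + 1 : ℕ) : ℝ) - 1 = (M : ℝ) := by push_cast; ring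
  rw [hcast] at hKs hη
  have hs₀ : 0 ≤ s₀ := le_trans hs hss
  have hden : 0 < r - (M : ℝ) * s₀ := by linarith
  have step3 : (r + s₀) ^ M ≤ η * r ^ M := by
    rw [hη]
    rw [div_mul_eq_mul_div, le_div_iff₀ hden]
    calc (r + s₀) ^ M * (r - (M : ℝ) * s₀) ≤ r ^ M * r := aux_eta M r s₀ hr hs₀ (by linarith)
      _ = r * r ^ M := by ring
  have step2 : (r + s) ^ M ≤ (r + s₀) ^ M :=
    pow_le_pow_left₀ (by linarith) (by linarith) M
  have step1 := aux_pow M r s hr.le hs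
  have hfin : ((M : ℝ) + 1) * s * (r + s) ^ M ≤ ((M : ℝ) + 1) * s * (η * r ^ M) := by
    apply mul_le_mul_of_nonneg_left (le_trans step2 step3) (by positivity)
  have hMsub : (M + 1) - 1 = M := by omega
  rw [hMsub]
  push_cast
  nlinarith [step1]

lemma aux_sum_inv_sqrt : ∀ (k : ℕ) (A : Finset ℕ), A.card = k → (∀ j ∈ A, 1 ≤ j) →
    ∑ j ∈ A, 1 / Real.sqrt j ≤ 2 * Real.sqrt k := by
  intro k
  induction k with
  | zero =>
    intro A hA _
    rw [Finset.card_eq_zero.mp hA]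
    simp
  | succ k ih =>
    intro A hA h1
    have hne : A.Nonempty := Finset.card_pos.mp (by omega)
    set M := A.max' hne with hMdef
    have hM : M ∈ A := A.max'_mem hne
    have hsub : A ⊆ Finset.Icc 1 M := fun j hj =>
      Finset.mem_Icc.mpr ⟨h1 j hj, A.le_max' j hj⟩
    have hcard : k + 1 ≤ M := by
      have h := Finset.card_le_card hsub
      rw [hA, Nat.card_Icc] at h
      omega
    have herase : (A.erase M).card = k := by
      rw [Finset.card_erase_of_mem hM, hA]
      omega
    have hIH : ∑ j ∈ A.erase M, 1 / Real.sqrt j ≤ 2 * Real.sqrt k :=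
      ih _ herase (fun j hj => h1 j (Finset.mem_of_mem_erase hj))
    have hsplit : ∑ j ∈ A.erase M, 1 / Real.sqrt j + 1 / Real.sqrt M
        = ∑ j ∈ A, 1 / Real.sqrt j := Finset.sum_erase_add A _ hM
    have hMk : 1 / Real.sqrt M ≤ 1 / Real.sqrt (k + 1) := by
      apply one_div_le_one_div_of_le
      · apply Real.sqrt_pos.mpr; positivity
      · apply Real.sqrt_le_sqrt; exact_mod_cast hcard
    have hsk1 : (0 : ℝ) < Real.sqrt (k + 1) := Real.sqrt_pos.mpr (by positivity)
    have hsq1 : Real.sqrt ((k : ℝ) + 1) * Real.sqrt ((k : ℝ) + 1) = (k : ℝ) + 1 :=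
      Real.mul_self_sqrt (by positivity)
    have hsq0 : Real.sqrt k * Real.sqrt k = (k : ℝ) := Real.mul_self_sqrt (by positivity)
    have hfin : 2 * Real.sqrt k + 1 / Real.sqrt ((k : ℝ) + 1) ≤ 2 * Real.sqrt ((k : ℝ) + 1) := by
      have hd : 1 / Real.sqrt ((k : ℝ) + 1) * Real.sqrt ((k : ℝ) + 1) = 1 :=
        one_div_mul_cancel hsk1.ne'
      nlinarith [sq_nonneg (Real.sqrt ((k : ℝ) + 1) - Real.sqrt (k : ℝ)),
        Real.sqrt_nonneg (k : ℝ), hsq0, hsq1, hsk1]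
    have hcast : ((k + 1 : ℕ) : ℝ) = (k : ℝ) + 1 := by push_cast; ring
    rw [hcast]
    calc ∑ j ∈ A, 1 / Real.sqrt j
        = ∑ j ∈ A.erase M, 1 / Real.sqrt j + 1 / Real.sqrt M := hsplit.symm
      _ ≤ 2 * Real.sqrt k + 1 / Real.sqrt ((k : ℝ) + 1) := by
          push_cast at hIH ⊢; linarith
      _ ≤ 2 * Real.sqrt ((k : ℝ) + 1) := hfin

set_option maxHeartbeats 1000000 in
/-- error bound for the linear read-out prediction built by thresholded
averaging of the per-prefix LISTA-VM estimates. -/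
theorem stmt_18 (d : ℕ) (hd : 0 < d)
    (βstar x : Fin d → ℝ) (bx : ℝ) (hx : l2 x ≤ bx)
    (y c₁ : ℝ) (hy : y = ∑ i, x i * βstar i) (hc₁ : c₁ = l1 βstar)
    (K : ℕ) (hK : 1 ≤ K)
    (γ : ℝ) (hγ0 : 0 < γ) (hγ1 : γ < 3 / 2)
    (r : ℝ) (hr : r = 1 - (2 / 3) * γ)
    (S : ℕ) (hS : 1 ≤ S) (c : ℝ) (hc : 0 < c) (δ : ℝ) (hδ0 : 0 < δ) (hδ1 : δ < 1)
    (b : ℝ)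
    (hb : b = 2 * γ * (2 * (S : ℝ) - 1)
        * Real.sqrt ((Real.log d + Real.log S - Real.log δ) / c))
    (n N₀ : ℕ) (hN₀ : 1 ≤ N₀) (hnN₀ : N₀ < n)
    (p : ℝ) (hp0 : 0 < p) (hp1 : p ≤ 1)
    (m : ℕ) (hm : (m : ℝ) = (n : ℝ) * p - p / 2) (hm1 : 1 ≤ m) (hmn : m ≤ n - N₀)
    (Cx : ℝ) (β : ℕ → Fin d → ℝ)
    (hβnorm : ∀ j ∈ Finset.Icc 1 n, l2 (β j) ≤ Cx)
    (ha : ∀ j : ℕ, N₀ < j → j ≤ n →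
      l1 (βstar - β j) ≤ c₁ * (r + b / Real.sqrt j) ^ K)
    (hKb : ((K : ℝ) - 1) * b / Real.sqrt N₀ < r)
    (η : ℝ) (hη : η = r / (r - ((K : ℝ) - 1) * b / Real.sqrt N₀))
    (ε : ℝ) (hε : ε = (K : ℝ) * Real.sqrt ((n : ℝ) * p) * r ^ K)
    (B' : ℝ) (J : Finset ℕ)
    (hJ : J = (Finset.Icc 1 n).filter fun j => B' ≤ ∑ i, x i * β j i)
    (hJN₀ : J ∩ Finset.Icc 1 N₀ = ∅)
    (hJcard : |((J.card : ℝ)) - (m : ℝ)| ≤ ε)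
    (yhat : ℝ)
    (hyhat : yhat = (1 / (m : ℝ)) * (∑ j ∈ J, ((∑ i, x i * β j i) - B')) + B')
    (c₄ : ℝ)
    (hc₄ : c₄ = (2 * Real.sqrt 2 * bx * c₁ * η
          * (2 * γ * (2 * (S : ℝ) - 1)
              * Real.sqrt ((Real.log d + Real.log S - Real.log δ) / c))
        + 2 * bx * Cx + 2 * |B'|) / Real.sqrt p) :
    |y - yhat| ≤ c₁ * bx * r ^ K + (c₄ * (K : ℝ) / Real.sqrt n) * r ^ (K - 1) := by
  rw [mul_div_assoc] at hKb hη
  -- basic facts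
  have hn1 : 1 ≤ n := by omega
  have hnR : (1 : ℝ) ≤ n := by exact_mod_cast hn1
  have hN₀R : (1 : ℝ) ≤ N₀ := by exact_mod_cast hN₀
  have hmR : (0 : ℝ) < m := by exact_mod_cast hm1
  have hsn : 0 < Real.sqrt n := Real.sqrt_pos.mpr (by linarith)
  have hsm : 0 < Real.sqrt m := Real.sqrt_pos.mpr hmR
  have hsp : 0 < Real.sqrt p := Real.sqrt_pos.mpr hp0
  have hsN₀ : 0 < Real.sqrt N₀ := Real.sqrt_pos.mpr (by linarith)
  have hbx0 : 0 ≤ bx := le_trans (Real.sqrt_nonneg _) hx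
  have hc₁0 : 0 ≤ c₁ := by
    rw [hc₁, l1]; positivity
  have hK1R : (0 : ℝ) ≤ (K : ℝ) - 1 := by
    have : (1 : ℝ) ≤ K := by exact_mod_cast hK
    linarith
  have hb0 : 0 ≤ b := by
    rw [hb]
    have h2S : (1 : ℝ) ≤ 2 * (S : ℝ) - 1 := by
      have : (1 : ℝ) ≤ S := by exact_mod_cast hS
      linarith
    apply mul_nonneg (mul_nonneg (by linarith) (by linarith)) (Real.sqrt_nonneg _)
  have hs₀0 : 0 ≤ b / Real.sqrt N₀ := div_nonneg hb0 (Real.sqrt_nonneg _)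
  have hr0 : 0 < r := lt_of_le_of_lt (mul_nonneg hK1R hs₀0) hKb
  have hr1 : r ≤ 1 := by rw [hr]; linarith
  have hη1 : 1 ≤ η := by
    rw [hη]
    have hden : 0 < r - ((K : ℝ) - 1) * (b / Real.sqrt N₀) := by linarith
    rw [le_div_iff₀ hden]
    have h9 := mul_nonneg hK1R hs₀0
    linarith
  have hη0 : 0 ≤ η := le_trans zero_le_one hη1
  have hCx0 : 0 ≤ Cx :=
    le_trans (Real.sqrt_nonneg _) (hβnorm 1 (Finset.mem_Icc.mpr ⟨le_refl 1, hn1⟩))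
  have hQ0 : 0 ≤ bx * Cx + |B'| := add_nonneg (mul_nonneg hbx0 hCx0) (abs_nonneg _)
  set G : ℝ := bx * c₁ * ((K : ℝ) * η * b) * r ^ (K - 1) with hGdef
  have hG0 : 0 ≤ G := by
    apply mul_nonneg (mul_nonneg (mul_nonneg hbx0 hc₁0) _) (pow_nonneg hr0.le _)
    positivity
  have hε0 : 0 ≤ ε := by
    rw [hε]
    positivity
  have hnp0 : (0 : ℝ) < (n : ℝ) * p := by positivity
  have hnp : (n : ℝ) * p ≤ 2 * m := by
    rw [hm]
    have h9 : 1 * p ≤ (n : ℝ) * p := mul_le_mul_of_nonneg_right hnR hp0.le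
    linarith
  have hspn : Real.sqrt p * Real.sqrt n = Real.sqrt ((n : ℝ) * p) := by
    rw [mul_comm ((n : ℝ)) p, Real.sqrt_mul hp0.le]
  have hpowK : r ^ K = r ^ (K - 1) * r := by
    rw [← pow_succ]
    congr 1
    omega
  -- key per-index bound
  have hkey : ∀ j : ℕ, N₀ < j → j ≤ n →
      |y - ∑ i, x i * β j i| ≤ bx * c₁ * r ^ K + G / Real.sqrt j := by
    intro j hj1 hj2
    have hjpos : (0 : ℝ) < j := by
      have : 0 < j := by omega
      exact_mod_cast this
    have hsj : 0 < Real.sqrt j := Real.sqrt_pos.mpr hjpos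
    have habs : ∀ i, |x i| ≤ l2 x := by
      intro i
      rw [l2, ← Real.sqrt_sq_eq_abs]
      apply Real.sqrt_le_sqrt
      exact Finset.single_le_sum (f := fun i => (x i) ^ 2) (fun i _ => sq_nonneg _)
        (Finset.mem_univ i)
    have h1 : y - ∑ i, x i * β j i = ∑ i, x i * (βstar i - β j i) := by
      rw [hy, ← Finset.sum_sub_distrib]
      exact Finset.sum_congr rfl fun i _ => by ring
    have h2 : |∑ i, x i * (βstar i - β j i)| ≤ bx * l1 (βstar - β j) := by
      calc |∑ i, x i * (βstar i - β j i)| ≤ ∑ i, |x i * (βstar i - β j i)| :=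
            Finset.abs_sum_le_sum_abs _ _
        _ = ∑ i, |x i| * |βstar i - β j i| := by simp [abs_mul]
        _ ≤ ∑ i, bx * |βstar i - β j i| := by
            apply Finset.sum_le_sum
            intro i _
            exact mul_le_mul_of_nonneg_right (le_trans (habs i) hx) (abs_nonneg _)
        _ = bx * l1 (βstar - β j) := by
            rw [l1, Finset.mul_sum]
            exact Finset.sum_congr rfl fun i _ => by rw [Pi.sub_apply]
    have hsle : b / Real.sqrt j ≤ b / Real.sqrt N₀ := by
      apply div_le_div_of_nonneg_left hb0 hsN₀
      apply Real.sqrt_le_sqrt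
      exact_mod_cast hj1.le
    have h4 : (r + b / Real.sqrt j) ^ K
        ≤ r ^ K + (K : ℝ) * η * (b / Real.sqrt j) * r ^ (K - 1) :=
      aux_binom K hK r _ (b / Real.sqrt N₀) η hr0 (div_nonneg hb0 (Real.sqrt_nonneg _))
        hsle hKb hη
    calc |y - ∑ i, x i * β j i| = |∑ i, x i * (βstar i - β j i)| := by rw [h1]
      _ ≤ bx * l1 (βstar - β j) := h2
      _ ≤ bx * (c₁ * (r + b / Real.sqrt j) ^ K) :=
          mul_le_mul_of_nonneg_left (ha j hj1 hj2) hbx0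
      _ ≤ bx * (c₁ * (r ^ K + (K : ℝ) * η * (b / Real.sqrt j) * r ^ (K - 1))) :=
          mul_le_mul_of_nonneg_left (mul_le_mul_of_nonneg_left h4 hc₁0) hbx0
      _ = bx * c₁ * r ^ K + G / Real.sqrt j := by
          rw [hGdef]; ring
  -- membership facts for J
  have hJmem : ∀ j ∈ J, N₀ < j ∧ j ≤ n := by
    intro j hj
    have hj' := hj
    rw [hJ, Finset.mem_filter, Finset.mem_Icc] at hj'
    refine ⟨?_, hj'.1.2⟩
    by_contra hcon
    push_neg at hcon
    have hmem : j ∈ J ∩ Finset.Icc 1 N₀ :=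
      Finset.mem_inter.mpr ⟨hj, Finset.mem_Icc.mpr ⟨hj'.1.1, hcon⟩⟩
    rw [hJN₀] at hmem
    exact Finset.notMem_empty j hmem
  have hDj : ∀ j ∈ J, |y - ∑ i, x i * β j i| ≤ bx * c₁ * r ^ K + G / Real.sqrt j :=
    fun j hj => hkey j (hJmem j hj).1 (hJmem j hj).2
  have hCS : ∀ j : ℕ, 1 ≤ j → j ≤ n → |(∑ i, x i * β j i) - B'| ≤ bx * Cx + |B'| := by
    intro j h1 h2
    have hcs : |∑ i, x i * β j i| ≤ l2 x * l2 (β j) := by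
      rw [l2, l2, ← Real.sqrt_mul (by positivity), ← Real.sqrt_sq_eq_abs]
      apply Real.sqrt_le_sqrt
      exact Finset.sum_mul_sq_le_sq_mul_sq _ _ _
    have hcs2 : l2 x * l2 (β j) ≤ bx * Cx :=
      mul_le_mul hx (hβnorm j (Finset.mem_Icc.mpr ⟨h1, h2⟩)) (Real.sqrt_nonneg _) hbx0
    calc |(∑ i, x i * β j i) - B'| ≤ |∑ i, x i * β j i| + |B'| := abs_sub _ _
      _ ≤ bx * Cx + |B'| := by linarith
  -- a generic bound for sums of |y - x·βj| over subsets of J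
  have hsumbound : ∀ A : Finset ℕ, A ⊆ J →
      |∑ j ∈ A, (y - ∑ i, x i * β j i)|
        ≤ (A.card : ℝ) * (bx * c₁ * r ^ K) + G * (2 * Real.sqrt A.card) := by
    intro A hA
    calc |∑ j ∈ A, (y - ∑ i, x i * β j i)|
        ≤ ∑ j ∈ A, |y - ∑ i, x i * β j i| := Finset.abs_sum_le_sum_abs _ _
      _ ≤ ∑ j ∈ A, (bx * c₁ * r ^ K + G / Real.sqrt j) :=
          Finset.sum_le_sum fun j hj => hDj j (hA hj)
      _ = (A.card : ℝ) * (bx * c₁ * r ^ K) + G * ∑ j ∈ A, 1 / Real.sqrt j := by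
          rw [Finset.sum_add_distrib, Finset.sum_const, nsmul_eq_mul, Finset.mul_sum]
          congr 1
          exact Finset.sum_congr rfl fun j _ => (mul_one_div _ _).symm
      _ ≤ (A.card : ℝ) * (bx * c₁ * r ^ K) + G * (2 * Real.sqrt A.card) := by
          have hs := aux_sum_inv_sqrt A.card A rfl
            (fun j hj => by have := (hJmem j (hA hj)).1; omega)
          exact add_le_add (le_refl _) (mul_le_mul_of_nonneg_left hs hG0)
  -- main intermediate bound
  have hmain : |y - yhat| ≤ bx * c₁ * r ^ K + G * (2 * Real.sqrt m) / m
      + ε * (bx * Cx + |B'|) / m := by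
    by_cases hcase : m ≤ J.card
    · -- more indices than m : take a subset of size m
      obtain ⟨J₁, hsub, hcard⟩ := Finset.exists_subset_card_eq hcase
      have hid : y - yhat = (1 / m) * (∑ j ∈ J₁, (y - ∑ i, x i * β j i))
          - (1 / m) * (∑ j ∈ J \ J₁, ((∑ i, x i * β j i) - B')) := by
        have hsplit : ∑ j ∈ J, ((∑ i, x i * β j i) - B')
            = ∑ j ∈ J \ J₁, ((∑ i, x i * β j i) - B')
              + ∑ j ∈ J₁, ((∑ i, x i * β j i) - B') :=
          (Finset.sum_sdiff hsub).symm
        have hsum1 : ∑ j ∈ J₁, (y - ∑ i, x i * β j i)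
            = (m : ℝ) * (y - B') - ∑ j ∈ J₁, ((∑ i, x i * β j i) - B') := by
          rw [Finset.sum_sub_distrib, Finset.sum_sub_distrib, Finset.sum_const,
            Finset.sum_const, hcard]
          push_cast
          ring
        rw [hyhat, hsplit, hsum1]
        field_simp
        ring
      have hA1 : |∑ j ∈ J₁, (y - ∑ i, x i * β j i)|
          ≤ (m : ℝ) * (bx * c₁ * r ^ K) + G * (2 * Real.sqrt m) := by
        have := hsumbound J₁ hsub
        rw [hcard] at this
        exact this
      have hA2 : |∑ j ∈ J \ J₁, ((∑ i, x i * β j i) - B')| ≤ ε * (bx * Cx + |B'|) := by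
        have hcard2 : ((J \ J₁).card : ℝ) = (J.card : ℝ) - m := by
          rw [Finset.card_sdiff_of_subset hsub, hcard]
          rw [Nat.cast_sub hcase]
        have hccε : ((J \ J₁).card : ℝ) ≤ ε := by
          rw [hcard2]
          exact le_trans (le_abs_self _) hJcard
        calc |∑ j ∈ J \ J₁, ((∑ i, x i * β j i) - B')|
            ≤ ∑ j ∈ J \ J₁, |(∑ i, x i * β j i) - B'| := Finset.abs_sum_le_sum_abs _ _
          _ ≤ ∑ j ∈ J \ J₁, (bx * Cx + |B'|) := by
              apply Finset.sum_le_sum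
              intro j hj
              have hjJ := Finset.mem_sdiff.mp hj |>.1
              have h := hJmem j hjJ
              exact hCS j (by omega) h.2
          _ = ((J \ J₁).card : ℝ) * (bx * Cx + |B'|) := by
              rw [Finset.sum_const, nsmul_eq_mul]
          _ ≤ ε * (bx * Cx + |B'|) := mul_le_mul_of_nonneg_right hccε hQ0
      rw [hid]
      calc |(1 / m) * (∑ j ∈ J₁, (y - ∑ i, x i * β j i))
          - (1 / m) * (∑ j ∈ J \ J₁, ((∑ i, x i * β j i) - B'))|
          ≤ |(1 / m) * (∑ j ∈ J₁, (y - ∑ i, x i * β j i))|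
            + |(1 / m) * (∑ j ∈ J \ J₁, ((∑ i, x i * β j i) - B'))| := abs_sub _ _
        _ = (1 / m) * |∑ j ∈ J₁, (y - ∑ i, x i * β j i)|
            + (1 / m) * |∑ j ∈ J \ J₁, ((∑ i, x i * β j i) - B')| := by
            rw [abs_mul, abs_mul, abs_of_pos (show (0 : ℝ) < 1 / m by positivity)]
        _ ≤ (1 / m) * ((m : ℝ) * (bx * c₁ * r ^ K) + G * (2 * Real.sqrt m))
            + (1 / m) * (ε * (bx * Cx + |B'|)) := by
            have h1m : (0 : ℝ) ≤ 1 / m := by positivity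
            exact add_le_add (mul_le_mul_of_nonneg_left hA1 h1m)
              (mul_le_mul_of_nonneg_left hA2 h1m)
        _ = bx * c₁ * r ^ K + G * (2 * Real.sqrt m) / m + ε * (bx * Cx + |B'|) / m := by
            field_simp
    · -- fewer indices than m
      push_neg at hcase
      have hacard : ((J.card : ℝ)) ≤ m := by exact_mod_cast hcase.le
      have hmaε : (m : ℝ) - J.card ≤ ε := by
        have := (abs_le.mp hJcard).1
        linarith
      have hid : y - yhat = (1 / m) * (∑ j ∈ J, (y - ∑ i, x i * β j i))
          + (((m : ℝ) - J.card) / m) * (y - B') := by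
        have hsum2 : ∑ j ∈ J, (y - ∑ i, x i * β j i)
            = (J.card : ℝ) * (y - B') - ∑ j ∈ J, ((∑ i, x i * β j i) - B') := by
          rw [Finset.sum_sub_distrib, Finset.sum_sub_distrib, Finset.sum_const,
            Finset.sum_const]
          push_cast
          ring
        rw [hyhat, hsum2]
        field_simp
        ring
      have hB1 : |∑ j ∈ J, (y - ∑ i, x i * β j i)|
          ≤ (J.card : ℝ) * (bx * c₁ * r ^ K) + G * (2 * Real.sqrt J.card) :=
        hsumbound J (subset_refl _)
      have hB2 : |y - B'| ≤ bx * c₁ * r ^ K + G / Real.sqrt n + (bx * Cx + |B'|) := by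
        have h1 := hkey n hnN₀ (le_refl n)
        have h2 := hCS n hn1 (le_refl n)
        calc |y - B'| = |(y - ∑ i, x i * β n i) + ((∑ i, x i * β n i) - B')| := by
              congr 1
              ring
          _ ≤ |y - ∑ i, x i * β n i| + |(∑ i, x i * β n i) - B'| := abs_add_le _ _
          _ ≤ bx * c₁ * r ^ K + G / Real.sqrt n + (bx * Cx + |B'|) := by linarith
      -- the key square-root inequality
      have hsqa : Real.sqrt J.card * Real.sqrt J.card = (J.card : ℝ) :=
        Real.mul_self_sqrt (by positivity)
      have hsqm : Real.sqrt m * Real.sqrt m = (m : ℝ) := Real.mul_self_sqrt hmR.le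
      have hsam : Real.sqrt J.card ≤ Real.sqrt m := Real.sqrt_le_sqrt hacard
      have hmn' : (m : ℝ) ≤ n := by
        have : m ≤ n := by omega
        exact_mod_cast this
      have hsmn : Real.sqrt m ≤ Real.sqrt n := Real.sqrt_le_sqrt hmn'
      have h2sq : 2 * Real.sqrt J.card + ((m : ℝ) - J.card) / Real.sqrt n
          ≤ 2 * Real.sqrt m := by
        have h5 : ((m : ℝ) - J.card) / Real.sqrt n ≤ ((m : ℝ) - J.card) / Real.sqrt m :=
          div_le_div_of_nonneg_left (by linarith) hsm hsmn
        have e : (Real.sqrt m + Real.sqrt J.card) * (Real.sqrt m - Real.sqrt J.card)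
            = (m : ℝ) - J.card := by
          rw [← mul_self_sub_mul_self, hsqm, hsqa]
        have hnn : 0 ≤ Real.sqrt m - Real.sqrt J.card := by linarith
        have h7 : ((m : ℝ) - J.card) / Real.sqrt m
            ≤ 2 * (Real.sqrt m - Real.sqrt J.card) := by
          rw [div_le_iff₀ hsm]
          calc (m : ℝ) - J.card
              = (Real.sqrt m + Real.sqrt J.card) * (Real.sqrt m - Real.sqrt J.card) := e.symm
            _ ≤ (2 * Real.sqrt m) * (Real.sqrt m - Real.sqrt J.card) := by
                apply mul_le_mul_of_nonneg_right _ hnn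
                have := Real.sqrt_nonneg (J.card : ℝ)
                linarith
            _ = 2 * (Real.sqrt m - Real.sqrt J.card) * Real.sqrt m := by ring
        linarith
      rw [hid]
      have hcoef : (0 : ℝ) ≤ ((m : ℝ) - J.card) / m := by
        apply div_nonneg (by linarith) hmR.le
      calc |(1 / m) * (∑ j ∈ J, (y - ∑ i, x i * β j i))
          + (((m : ℝ) - J.card) / m) * (y - B')|
          ≤ |(1 / m) * (∑ j ∈ J, (y - ∑ i, x i * β j i))|
            + |(((m : ℝ) - J.card) / m) * (y - B')| := abs_add_le _ _
        _ = (1 / m) * |∑ j ∈ J, (y - ∑ i, x i * β j i)|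
            + (((m : ℝ) - J.card) / m) * |y - B'| := by
            rw [abs_mul, abs_mul, abs_of_pos (show (0 : ℝ) < 1 / m by positivity),
              abs_of_nonneg hcoef]
        _ ≤ (1 / m) * ((J.card : ℝ) * (bx * c₁ * r ^ K) + G * (2 * Real.sqrt J.card))
            + (((m : ℝ) - J.card) / m)
              * (bx * c₁ * r ^ K + G / Real.sqrt n + (bx * Cx + |B'|)) := by
            have h1m : (0 : ℝ) ≤ 1 / m := by positivity
            exact add_le_add (mul_le_mul_of_nonneg_left hB1 h1m)
              (mul_le_mul_of_nonneg_left hB2 hcoef)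
        _ = bx * c₁ * r ^ K
            + (G / m) * (2 * Real.sqrt J.card + ((m : ℝ) - J.card) / Real.sqrt n)
            + (((m : ℝ) - J.card) / m) * (bx * Cx + |B'|) := by
            field_simp
            ring
        _ ≤ bx * c₁ * r ^ K + (G / m) * (2 * Real.sqrt m)
            + (ε / m) * (bx * Cx + |B'|) := by
            have hGm : (0 : ℝ) ≤ G / m := by positivity
            have t1 : (G / m) * (2 * Real.sqrt J.card + ((m : ℝ) - J.card) / Real.sqrt n)
                ≤ (G / m) * (2 * Real.sqrt m) := mul_le_mul_of_nonneg_left h2sq hGm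
            have t2 : (((m : ℝ) - J.card) / m) * (bx * Cx + |B'|)
                ≤ (ε / m) * (bx * Cx + |B'|) := by
              apply mul_le_mul_of_nonneg_right _ hQ0
              exact div_le_div_of_nonneg_right hmaε hmR.le
            linarith
        _ = bx * c₁ * r ^ K + G * (2 * Real.sqrt m) / m + ε * (bx * Cx + |B'|) / m := by
            ring
  -- final assembly
  have hc₄' : c₄ = (2 * Real.sqrt 2 * bx * c₁ * η * b + 2 * (bx * Cx) + 2 * |B'|)
      / Real.sqrt p := by
    rw [hc₄, hb]
    ring_nf
  have hcore1 : 2 * Real.sqrt m / m ≤ 2 * Real.sqrt 2 / (Real.sqrt p * Real.sqrt n) := by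
    rw [div_le_div_iff₀ hmR (by positivity)]
    have h7 : Real.sqrt ((n : ℝ) * p) ≤ Real.sqrt 2 * Real.sqrt m := by
      rw [← Real.sqrt_mul (by norm_num : (0:ℝ) ≤ 2)]
      exact Real.sqrt_le_sqrt hnp
    calc 2 * Real.sqrt m * (Real.sqrt p * Real.sqrt n)
        = 2 * Real.sqrt m * Real.sqrt ((n : ℝ) * p) := by rw [hspn]
      _ ≤ 2 * Real.sqrt m * (Real.sqrt 2 * Real.sqrt m) := by
          apply mul_le_mul_of_nonneg_left h7 (by positivity)
      _ = 2 * Real.sqrt 2 * (Real.sqrt m * Real.sqrt m) := by ring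
      _ = 2 * Real.sqrt 2 * m := by rw [Real.mul_self_sqrt hmR.le]
  have hcore2 : ε / m ≤ 2 * (K : ℝ) * r ^ (K - 1) / (Real.sqrt p * Real.sqrt n) := by
    rw [hε, div_le_div_iff₀ hmR (by positivity)]
    calc (K : ℝ) * Real.sqrt ((n : ℝ) * p) * r ^ K * (Real.sqrt p * Real.sqrt n)
        = (K : ℝ) * r ^ K * (Real.sqrt ((n : ℝ) * p) * Real.sqrt ((n : ℝ) * p)) := by
          rw [hspn]; ring
      _ = (K : ℝ) * r ^ K * ((n : ℝ) * p) := by rw [Real.mul_self_sqrt hnp0.le]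
      _ = (K : ℝ) * r ^ (K - 1) * (r * ((n : ℝ) * p)) := by rw [hpowK]; ring
      _ ≤ (K : ℝ) * r ^ (K - 1) * (2 * m) := by
          apply mul_le_mul_of_nonneg_left _ (by positivity)
          have h9 : r * ((n : ℝ) * p) ≤ 1 * ((n : ℝ) * p) :=
            mul_le_mul_of_nonneg_right hr1 hnp0.le
          linarith
      _ = 2 * (K : ℝ) * r ^ (K - 1) * m := by ring
  have piece1 : G * (2 * Real.sqrt m) / m
      ≤ 2 * Real.sqrt 2 * bx * c₁ * η * b / Real.sqrt p * (K : ℝ)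
        / Real.sqrt n * r ^ (K - 1) := by
    have e : 2 * Real.sqrt 2 * bx * c₁ * η * b / Real.sqrt p * (K : ℝ)
        / Real.sqrt n * r ^ (K - 1)
        = G * (2 * Real.sqrt 2 / (Real.sqrt p * Real.sqrt n)) := by
      rw [hGdef]; field_simp
    rw [e]
    calc G * (2 * Real.sqrt m) / m = G * (2 * Real.sqrt m / m) := by ring
      _ ≤ G * (2 * Real.sqrt 2 / (Real.sqrt p * Real.sqrt n)) :=
          mul_le_mul_of_nonneg_left hcore1 hG0
  have piece2 : ε * (bx * Cx + |B'|) / m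
      ≤ (2 * (bx * Cx) + 2 * |B'|) / Real.sqrt p * (K : ℝ) / Real.sqrt n * r ^ (K - 1) := by
    have e : (2 * (bx * Cx) + 2 * |B'|) / Real.sqrt p * (K : ℝ) / Real.sqrt n * r ^ (K - 1)
        = (2 * (K : ℝ) * r ^ (K - 1) / (Real.sqrt p * Real.sqrt n)) * (bx * Cx + |B'|) := by
      field_simp
    rw [e]
    calc ε * (bx * Cx + |B'|) / m = (ε / m) * (bx * Cx + |B'|) := by ring
      _ ≤ (2 * (K : ℝ) * r ^ (K - 1) / (Real.sqrt p * Real.sqrt n)) * (bx * Cx + |B'|) :=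
          mul_le_mul_of_nonneg_right hcore2 hQ0
  have hRHSsplit : (c₄ * (K : ℝ) / Real.sqrt n) * r ^ (K - 1)
      = 2 * Real.sqrt 2 * bx * c₁ * η * b / Real.sqrt p * (K : ℝ)
          / Real.sqrt n * r ^ (K - 1)
        + (2 * (bx * Cx) + 2 * |B'|) / Real.sqrt p * (K : ℝ) / Real.sqrt n
          * r ^ (K - 1) := by
    rw [hc₄']
    field_simp
    ring
  calc |y - yhat| ≤ bx * c₁ * r ^ K + G * (2 * Real.sqrt m) / m
      + ε * (bx * Cx + |B'|) / m := hmain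
    _ ≤ c₁ * bx * r ^ K + (c₄ * (K : ℝ) / Real.sqrt n) * r ^ (K - 1) := by
        rw [hRHSsplit]
        have : bx * c₁ * r ^ K = c₁ * bx * r ^ K := by ring
        linarith [piece1, piece2]
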